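/- If d is a continuous metric on the projective space of a Hilbert space of dimension D, then the infimum defining W_p^d(ρ,σ) is attained by a transport plan with at most 2D² elements. -/

import Mathlib

open scoped BigOperators ComplexOrder
open Matrix

noncomputable section

abbrev QV (D : ℕ) := EuclideanSpace ℂ (Fin D)

def qproj {D : ℕ} (ψ : QV D) : Matrix (Fin D) (Fin D) ℂ :=
  Matrix.of fun i j => ψ i * (starRingEnd ℂ) (ψ j)

/-- A quantum transport plan between `ρ` and `σ`. -/
structure TPlan (D : ℕ) (ρ σ : Matrix (Fin D) (Fin D) ℂ) where
  n : ℕ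
  q : Fin n → ℝ
  ψ : Fin n → QV D
  φ : Fin n → QV D
  q_pos : ∀ j, 0 < q j
  ψ_unit : ∀ j, ‖ψ j‖ = 1
  φ_unit : ∀ j, ‖φ j‖ = 1
  margL : ∑ j, (q j : ℂ) • qproj (ψ j) = ρ
  margR : ∑ j, (q j : ℂ) • qproj (φ j) = σ

/-- p-th order transport cost of a plan (before the 1/p root). -/
def Tcost {D : ℕ} (d : QV D → QV D → ℝ) (p : ℝ) {ρ σ : Matrix (Fin D) (Fin D) ℂ}
    (Q : TPlan D ρ σ) : ℝ :=
  ∑ j, Q.q j * d (Q.ψ j) (Q.φ j) ^ p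

/-- The order-p quantum Wasserstein distance. -/
def Wp {D : ℕ} (d : QV D → QV D → ℝ) (p : ℝ) (ρ σ : Matrix (Fin D) (Fin D) ℂ) : ℝ :=
  sInf { x | ∃ Q : TPlan D ρ σ, x = (Tcost d p Q) ^ (1/p) }

/-- The infinite-order quantum Wasserstein distance. -/
def Winf {D : ℕ} (d : QV D → QV D → ℝ) (ρ σ : Matrix (Fin D) (Fin D) ℂ) : ℝ :=
  sInf { x | ∃ Q : TPlan D ρ σ, x = ⨆ j, d (Q.ψ j) (Q.φ j) }

def IsDensity {D : ℕ} (ρ : Matrix (Fin D) (Fin D) ℂ) : Prop :=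
  ρ.PosSemidef ∧ ρ.trace = 1

/-- Hilbert–Schmidt (Frobenius) norm. -/
def frob {D : ℕ} (A : Matrix (Fin D) (Fin D) ℂ) : ℝ :=
  Real.sqrt (∑ i, ∑ j, ‖A i j‖ ^ 2)

/-- Action of a matrix on a vector of the Euclidean space. -/
def act {D : ℕ} (U : Matrix (Fin D) (Fin D) ℂ) (ψ : QV D) : QV D :=
  (EuclideanSpace.equiv (Fin D) ℂ).symm (U.mulVec (EuclideanSpace.equiv (Fin D) ℂ ψ))

/-- Dual Lipschitz constant of an observable. -/
def Ld {D : ℕ} (d : QV D → QV D → ℝ) (O : Matrix (Fin D) (Fin D) ℂ) : ℝ :=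
  sSup { x | ∃ ρ σ : Matrix (Fin D) (Fin D) ℂ, IsDensity ρ ∧ IsDensity σ ∧ ρ ≠ σ ∧
    x = ((O * (ρ - σ)).trace).re / Wp d 1 ρ σ }

/-- Double-dual norm. -/
def DWnorm {D : ℕ} (d : QV D → QV D → ℝ) (X : Matrix (Fin D) (Fin D) ℂ) : ℝ :=
  sSup { x | ∃ O : Matrix (Fin D) (Fin D) ℂ, O.IsHermitian ∧ O.trace = 0 ∧ Ld d O ≤ 1 ∧
    x = ((O * X).trace).re }

/-- Trace (nuclear) norm. -/
def traceNorm {D : ℕ} (A : Matrix (Fin D) (Fin D) ℂ) : ℝ :=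
  ((Matrix.isHermitian_conjTranspose_mul_self A).eigenvectorUnitary.1 *
    Matrix.diagonal ((fun r : ℝ => (r : ℂ)) ∘ (Real.sqrt ·) ∘ (Matrix.isHermitian_conjTranspose_mul_self A).eigenvalues) *
    (star (Matrix.isHermitian_conjTranspose_mul_self A).eigenvectorUnitary : Matrix (Fin D) (Fin D) ℂ)).trace.re

lemma qproj_herm {D : ℕ} (ψ : QV D) : (qproj ψ).IsHermitian := by
  ext i j
  simp [qproj, Matrix.conjTranspose_apply, mul_comm]

lemma trace_qproj {D : ℕ} (ψ : QV D) (h : ‖ψ‖ = 1) : (qproj ψ).trace = 1 := by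
  have h2 : (‖ψ‖ : ℝ) ^ 2 = ∑ i, ‖ψ i‖ ^ 2 := PiLp.norm_sq_eq_of_L2 _ ψ
  rw [h] at h2
  have : (qproj ψ).trace = ((∑ i, ‖ψ i‖ ^ 2 : ℝ) : ℂ) := by
    simp only [Matrix.trace, Matrix.diag, qproj, Matrix.of_apply, Complex.mul_conj]
    push_cast
    congr 1
    ext i
    rw [Complex.normSq_eq_norm_sq]
    norm_num [Complex.norm_def, Complex.sq_norm]
  rw [this, ← h2]
  norm_num

lemma cleanup {D : ℕ} {ρ σ : Matrix (Fin D) (Fin D) ℂ} (d : QV D → QV D → ℝ) (p : ℝ)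
    {n : ℕ} (q : Fin n → ℝ) (ψ φ : Fin n → QV D)
    (hq : ∀ j, 0 ≤ q j) (hψ : ∀ j, ‖ψ j‖ = 1) (hφ : ∀ j, ‖φ j‖ = 1)
    (hL : ∑ j, (q j : ℂ) • qproj (ψ j) = ρ) (hR : ∑ j, (q j : ℂ) • qproj (φ j) = σ) :
    ∃ Q : TPlan D ρ σ, Q.n = (Finset.univ.filter (fun j => q j ≠ 0)).card ∧
      Tcost d p Q = ∑ j, q j * d (ψ j) (φ j) ^ p := by
  classical
  set s : Finset (Fin n) := Finset.univ.filter (fun j => q j ≠ 0) with hs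
  have e := s.orderIsoOfFin (k := s.card) rfl
  have key : ∀ {M : Type} [AddCommMonoid M] (f : Fin n → M), (∀ j, q j = 0 → f j = 0) →
      ∑ i : Fin s.card, f (e i) = ∑ j, f j := by
    intro M _ f hf
    rw [show ∑ i : Fin s.card, f (e i) = ∑ x : s, f x from
      Fintype.sum_equiv e.toEquiv _ _ (fun i => rfl), Finset.sum_coe_sort s f]
    refine Finset.sum_subset (Finset.subset_univ s) (fun j _ hj => ?_)
    have : ¬ (j ∈ Finset.univ ∧ q j ≠ 0) := fun h => hj (Finset.mem_filter.mpr h)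
    push_neg at this
    exact hf j (this (Finset.mem_univ j))
  have hmem : ∀ i : Fin s.card, q (e i) ≠ 0 := by
    intro i
    have h2 := (e i).2
    exact (Finset.mem_filter.mp h2).2
  refine ⟨⟨s.card, fun i => q (e i), fun i => ψ (e i), fun i => φ (e i),
    fun i => lt_of_le_of_ne (hq _) (Ne.symm (hmem i)),
    fun i => hψ _, fun i => hφ _, ?_, ?_⟩, rfl, ?_⟩
  · rw [key (fun j => (q j : ℂ) • qproj (ψ j)) (fun j hj => by simp [hj])]; exact hL
  · rw [key (fun j => (q j : ℂ) • qproj (φ j)) (fun j hj => by simp [hj])]; exact hR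
  · exact key (fun j => q j * d (ψ j) (φ j) ^ p) (fun j hj => by simp [hj])

lemma exists_decomp {D : ℕ} (ρ : Matrix (Fin D) (Fin D) ℂ) (hρ : IsDensity ρ) :
    ∃ (w : Fin D → ℝ) (u : Fin D → QV D), (∀ i, 0 ≤ w i) ∧ (∀ i, ‖u i‖ = 1) ∧
      ∑ i, (w i : ℂ) • qproj (u i) = ρ := by
  classical
  have hH : ρ.IsHermitian := hρ.1.1
  set U : Matrix (Fin D) (Fin D) ℂ := (hH.eigenvectorUnitary : Matrix (Fin D) (Fin D) ℂ)
  have hU : star U * U = 1 := hH.eigenvectorUnitary.2.1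
  have hcol : ∀ k, ∑ i, Complex.normSq (U i k) = 1 := by
    intro k
    have h1 : (star U * U) k k = 1 := by rw [hU]; simp
    rw [Matrix.mul_apply] at h1
    have : ∀ i, (star U) k i * U i k = (Complex.normSq (U i k) : ℂ) := by
      intro i
      simp [Matrix.star_apply, ← Complex.normSq_eq_conj_mul_self]
    rw [Finset.sum_congr rfl (fun i _ => this i)] at h1
    exact_mod_cast (by exact_mod_cast h1 : ((∑ i, Complex.normSq (U i k) : ℝ) : ℂ) = 1)
  refine ⟨hH.eigenvalues, fun k => (EuclideanSpace.equiv (Fin D) ℂ).symm (fun i => U i k),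
    fun i => hρ.1.eigenvalues_nonneg i, ?_, ?_⟩
  · intro k
    have hent : ∀ i, ((EuclideanSpace.equiv (Fin D) ℂ).symm (fun i => U i k) : QV D) i = U i k :=
      fun _ => rfl
    have : ‖(EuclideanSpace.equiv (Fin D) ℂ).symm (fun i => U i k)‖ ^ 2 = 1 := by
      rw [PiLp.norm_sq_eq_of_L2, ← hcol k]
      refine Finset.sum_congr rfl (fun i _ => ?_)
      rw [hent i, Complex.sq_norm]
    nlinarith [norm_nonneg ((EuclideanSpace.equiv (Fin D) ℂ).symm (fun i => U i k))]
  · have hent : ∀ k i, ((EuclideanSpace.equiv (Fin D) ℂ).symm (fun i => U i k) : QV D) i = U i k :=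
      fun _ _ => rfl
    have hspec := hH.spectral_theorem
    ext i j
    conv_rhs => rw [hspec]
    simp only [Matrix.sum_apply, Matrix.smul_apply, qproj, Matrix.of_apply, hent, smul_eq_mul]
    rw [Unitary.conjStarAlgAut_apply, Matrix.mul_apply]
    refine Finset.sum_congr rfl (fun k _ => ?_)
    rw [Matrix.mul_diagonal, Matrix.star_apply]
    simp only [Function.comp_apply]
    show _ = U i k * _ * star (U j k)
    rw [Complex.star_def]
    exact (by ring : ((hH.eigenvalues k : ℝ) : ℂ) * (U i k * (starRingEnd ℂ) (U j k)) =
      U i k * ((hH.eigenvalues k : ℝ) : ℂ) * ((starRingEnd ℂ) (U j k)))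

def fH {D : ℕ} (A : Matrix (Fin D) (Fin D) ℂ) : Fin D × Fin D → ℝ :=
  fun ik => if ik.1 ≤ ik.2 then (A ik.1 ik.2).re else (A ik.1 ik.2).im

lemma fH_zero {D : ℕ} {A : Matrix (Fin D) (Fin D) ℂ} (hA : A.IsHermitian)
    (h : fH A = 0) : A = 0 := by
  have hc : ∀ i j : Fin D, A i j = (starRingEnd ℂ) (A j i) := fun i j => (hA.apply i j).symm
  have hre : ∀ i j : Fin D, (A i j).re = (A j i).re := by
    intro i j; rw [hc i j]; simp
  have him : ∀ i j : Fin D, (A i j).im = -(A j i).im := by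
    intro i j; rw [hc i j]; simp
  ext i j
  have h1 := congrFun h (i, j)
  have h2 := congrFun h (j, i)
  simp only [fH, Pi.zero_apply] at h1 h2
  simp only [Matrix.zero_apply]
  rcases lt_trichotomy i j with hij | hij | hij
  · rw [if_pos hij.le] at h1
    rw [if_neg (not_le.mpr hij)] at h2
    refine Complex.ext h1 ?_
    rw [him i j, h2, neg_zero]; simp
  · subst hij
    rw [if_pos le_rfl] at h1
    refine Complex.ext (by rw [h1]; simp) ?_
    have := him i i
    simp only [Complex.zero_im]
    linarith
  · rw [if_neg (not_le.mpr hij)] at h1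
    rw [if_pos hij.le] at h2
    refine Complex.ext ?_ (by rw [h1]; simp)
    rw [hre i j, h2]; simp

-- real-linear behaviour of fH on real combinations
lemma fH_sum {D : ℕ} {n : ℕ} (c : Fin n → ℝ) (P : Fin n → Matrix (Fin D) (Fin D) ℂ) :
    fH (∑ j, (c j : ℂ) • P j) = ∑ j, c j • fH (P j) := by
  funext ik
  by_cases h : ik.1 ≤ ik.2
  · simp only [fH, Finset.sum_apply, Matrix.sum_apply, Matrix.smul_apply, smul_eq_mul,
      if_pos h, Complex.re_sum, Pi.smul_apply]
    exact Finset.sum_congr rfl (fun j _ => by simp [Complex.mul_re])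
  · simp only [fH, Finset.sum_apply, Matrix.sum_apply, Matrix.smul_apply, smul_eq_mul,
      if_neg h, Complex.im_sum, Pi.smul_apply]
    exact Finset.sum_congr rfl (fun j _ => by simp [Complex.mul_im])

lemma herm_comb {D : ℕ} {n : ℕ} (c : Fin n → ℝ) (ψ : Fin n → QV D) :
    (∑ j, (c j : ℂ) • qproj (ψ j)).IsHermitian := by
  unfold Matrix.IsHermitian
  rw [Matrix.conjTranspose_sum]
  refine Finset.sum_congr rfl (fun j _ => ?_)
  rw [Matrix.conjTranspose_smul, (qproj_herm (ψ j)).eq]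
  congr 1
  simp

lemma exists_relation {D n : ℕ} (hn : 2 * D ^ 2 < n) (ψ φ : Fin n → QV D) :
    ∃ c : Fin n → ℝ, (∃ j, c j ≠ 0) ∧ ∑ j, (c j : ℂ) • qproj (ψ j) = 0 ∧
      ∑ j, (c j : ℂ) • qproj (φ j) = 0 := by
  classical
  set v : Fin n → ((Fin D × Fin D → ℝ) × (Fin D × Fin D → ℝ)) :=
    fun j => (fH (qproj (ψ j)), fH (qproj (φ j))) with hv
  have hfr : Module.finrank ℝ ((Fin D × Fin D → ℝ) × (Fin D × Fin D → ℝ)) = 2 * D ^ 2 := by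
    simp [Module.finrank_prod, Module.finrank_pi]
    ring
  have hnli : ¬ LinearIndependent ℝ v := by
    intro h
    have := h.fintype_card_le_finrank
    rw [hfr, Fintype.card_fin] at this
    omega
  obtain ⟨c, hc0, j, hj⟩ := Fintype.not_linearIndependent_iff.mp hnli
  refine ⟨c, ⟨j, hj⟩, ?_, ?_⟩
  · apply fH_zero (herm_comb c ψ)
    rw [fH_sum]
    have h1 := congrArg Prod.fst hc0
    simpa [hv, Prod.fst_sum] using h1
  · apply fH_zero (herm_comb c φ)
    rw [fH_sum]
    have h2 := congrArg Prod.snd hc0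
    simpa [hv, Prod.snd_sum] using h2


lemma shrink_aux {D : ℕ} {ρ σ : Matrix (Fin D) (Fin D) ℂ} (d : QV D → QV D → ℝ) (p : ℝ)
    (Q : TPlan D ρ σ) (c : Fin Q.n → ℝ)
    (hP : ∑ j, (c j : ℂ) • qproj (Q.ψ j) = 0)
    (hQm : ∑ j, (c j : ℂ) • qproj (Q.φ j) = 0)
    (hsum : ∑ j, c j = 0)
    (hwnn : 0 ≤ ∑ j, c j * (d (Q.ψ j) (Q.φ j) ^ p))
    (hne : ∃ j, c j ≠ 0) :
    ∃ Q' : TPlan D ρ σ, Q'.n < Q.n ∧ Tcost d p Q' ≤ Tcost d p Q := by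
  classical
  have hex : ∃ j ∈ Finset.univ, 0 < c j := by
    refine Finset.exists_pos_of_sum_zero_of_exists_nonzero c (by simpa using hsum) ?_
    obtain ⟨j, hj⟩ := hne
    exact ⟨j, Finset.mem_univ j, hj⟩
  set S : Finset (Fin Q.n) := Finset.univ.filter (fun j => 0 < c j) with hS
  have hSne : S.Nonempty := by
    obtain ⟨j, _, hj⟩ := hex
    exact ⟨j, Finset.mem_filter.mpr ⟨Finset.mem_univ j, hj⟩⟩
  obtain ⟨j0, hj0S, hmin⟩ := Finset.exists_min_image S (fun j => Q.q j / c j) hSne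
  have hc0 : 0 < c j0 := (Finset.mem_filter.mp hj0S).2
  set t : ℝ := Q.q j0 / c j0 with ht
  have ht0 : 0 < t := div_pos (Q.q_pos j0) hc0
  set q' : Fin Q.n → ℝ := fun j => Q.q j - t * c j with hq'
  have hq'nn : ∀ j, 0 ≤ q' j := by
    intro j
    rcases le_or_gt (c j) 0 with h | h
    · have h1 : t * c j ≤ 0 := mul_nonpos_of_nonneg_of_nonpos ht0.le h
      have h2 := (Q.q_pos j).le
      simp only [hq']
      linarith
    · have hjS : j ∈ S := Finset.mem_filter.mpr ⟨Finset.mem_univ j, h⟩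
      have h1 : t ≤ Q.q j / c j := hmin j hjS
      have h2 : t * c j ≤ Q.q j := by
        rw [← le_div_iff₀ h]
        exact h1
      simp only [hq']
      linarith
  have hq'j0 : q' j0 = 0 := by
    simp only [hq', ht]
    field_simp
    ring
  have key : ∀ (ψs : Fin Q.n → QV D), (∑ j, (c j : ℂ) • qproj (ψs j) = 0) →
      ∑ j, (q' j : ℂ) • qproj (ψs j) = ∑ j, (Q.q j : ℂ) • qproj (ψs j) := by
    intro ψs h0
    have : ∑ j, (q' j : ℂ) • qproj (ψs j) =
        ∑ j, ((Q.q j : ℂ) • qproj (ψs j) - (t : ℂ) • ((c j : ℂ) • qproj (ψs j))) := by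
      refine Finset.sum_congr rfl (fun j _ => ?_)
      rw [smul_smul, ← sub_smul]
      congr 1
      push_cast [hq']
      ring
    rw [this, Finset.sum_sub_distrib, ← Finset.smul_sum, h0, smul_zero, sub_zero]
  have hL : ∑ j, (q' j : ℂ) • qproj (Q.ψ j) = ρ := by rw [key _ hP, Q.margL]
  have hR : ∑ j, (q' j : ℂ) • qproj (Q.φ j) = σ := by rw [key _ hQm, Q.margR]
  obtain ⟨Q', hQn, hQc⟩ := cleanup d p q' Q.ψ Q.φ hq'nn Q.ψ_unit Q.φ_unit hL hR
  refine ⟨Q', ?_, ?_⟩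
  · rw [hQn]
    have hsub : Finset.univ.filter (fun j => q' j ≠ 0) ⊆ Finset.univ.erase j0 := by
      intro j hj
      refine Finset.mem_erase.mpr ⟨?_, Finset.mem_univ _⟩
      rintro rfl
      exact (Finset.mem_filter.mp hj).2 hq'j0
    have h1 := Finset.card_le_card hsub
    have h2 : (Finset.univ.erase j0).card = Q.n - 1 := by
      rw [Finset.card_erase_of_mem (Finset.mem_univ _), Finset.card_univ, Fintype.card_fin]
    have h3 : 0 < Q.n := Fin.pos_iff_nonempty.mpr ⟨j0⟩
    omega
  · rw [hQc]
    have heq : ∑ j, q' j * (d (Q.ψ j) (Q.φ j) ^ p) =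
        (∑ j, Q.q j * (d (Q.ψ j) (Q.φ j) ^ p)) - t * ∑ j, c j * (d (Q.ψ j) (Q.φ j) ^ p) := by
      rw [Finset.mul_sum, ← Finset.sum_sub_distrib]
      refine Finset.sum_congr rfl (fun j _ => ?_)
      simp only [hq']
      ring
    rw [heq]
    have : 0 ≤ t * ∑ j, c j * (d (Q.ψ j) (Q.φ j) ^ p) := mul_nonneg ht0.le hwnn
    unfold Tcost
    linarith

lemma shrink {D : ℕ} {ρ σ : Matrix (Fin D) (Fin D) ℂ} (d : QV D → QV D → ℝ) (p : ℝ)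
    (Q : TPlan D ρ σ) (hn : 2 * D ^ 2 < Q.n) :
    ∃ Q' : TPlan D ρ σ, Q'.n < Q.n ∧ Tcost d p Q' ≤ Tcost d p Q := by
  obtain ⟨c0, hne0, hP0, hQ0⟩ := exists_relation hn Q.ψ Q.φ
  have hsum0 : ∑ j, c0 j = 0 := by
    have h1 : (∑ j, (c0 j : ℂ) • qproj (Q.ψ j)).trace = 0 := by rw [hP0]; simp
    rw [Matrix.trace_sum] at h1
    have h2 : ∀ j, ((c0 j : ℂ) • qproj (Q.ψ j)).trace = (c0 j : ℂ) := by
      intro j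
      rw [Matrix.trace_smul, trace_qproj _ (Q.ψ_unit j)]
      simp
    rw [Finset.sum_congr rfl (fun j _ => h2 j)] at h1
    exact_mod_cast h1
  rcases le_or_gt 0 (∑ j, c0 j * (d (Q.ψ j) (Q.φ j) ^ p)) with hsgn | hsgn
  · exact shrink_aux d p Q c0 hP0 hQ0 hsum0 hsgn hne0
  · refine shrink_aux d p Q (-c0) ?_ ?_ ?_ ?_ ?_
    · rw [← neg_eq_zero, ← hP0, ← Finset.sum_neg_distrib]
      refine Finset.sum_congr rfl (fun j _ => ?_)
      simp [Pi.neg_apply, neg_smul]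
    · rw [← neg_eq_zero, ← hQ0, ← Finset.sum_neg_distrib]
      refine Finset.sum_congr rfl (fun j _ => ?_)
      simp [Pi.neg_apply, neg_smul]
    · simpa using hsum0
    · have : ∑ j, (-c0) j * (d (Q.ψ j) (Q.φ j) ^ p) =
          -∑ j, c0 j * (d (Q.ψ j) (Q.φ j) ^ p) := by
        rw [← Finset.sum_neg_distrib]
        exact Finset.sum_congr rfl (fun j _ => by simp only [Pi.neg_apply]; ring)
      rw [this]
      linarith
    · obtain ⟨j, hj⟩ := hne0
      exact ⟨j, by simpa using hj⟩

lemma reduce {D : ℕ} {ρ σ : Matrix (Fin D) (Fin D) ℂ} (d : QV D → QV D → ℝ) (p : ℝ) :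
    ∀ (N : ℕ) (Q : TPlan D ρ σ), Q.n ≤ N →
      ∃ Q' : TPlan D ρ σ, Q'.n ≤ 2 * D ^ 2 ∧ Tcost d p Q' ≤ Tcost d p Q := by
  intro N
  induction N with
  | zero => exact fun Q h => ⟨Q, by omega, le_rfl⟩
  | succ N ih =>
    intro Q h
    by_cases hn : Q.n ≤ 2 * D ^ 2
    · exact ⟨Q, hn, le_rfl⟩
    · obtain ⟨Q'', hlt, hle⟩ := shrink d p Q (by omega)
      obtain ⟨Q', h1, h2⟩ := ih Q'' (by omega)
      exact ⟨Q', h1, h2.trans hle⟩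


lemma Tcost_nonneg {D : ℕ} {ρ σ : Matrix (Fin D) (Fin D) ℂ} (d : QV D → QV D → ℝ)
    (hdnn : ∀ a b : QV D, 0 ≤ d a b) (p : ℝ) (Q : TPlan D ρ σ) : 0 ≤ Tcost d p Q :=
  Finset.sum_nonneg fun j _ =>
    mul_nonneg (Q.q_pos j).le (Real.rpow_nonneg (hdnn _ _) p)

lemma pad {D : ℕ} {ρ σ : Matrix (Fin D) (Fin D) ℂ} (d : QV D → QV D → ℝ) (p : ℝ)
    (N : ℕ) (hD : 0 < D) (Q : TPlan D ρ σ) (hQn : Q.n ≤ N) :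
    ∃ (q : Fin N → ℝ) (ψ φ : Fin N → QV D), (∀ j, 0 ≤ q j) ∧ (∀ j, ‖ψ j‖ = 1) ∧
      (∀ j, ‖φ j‖ = 1) ∧ (∑ j, (q j : ℂ) • qproj (ψ j) = ρ) ∧
      (∑ j, (q j : ℂ) • qproj (φ j) = σ) ∧
      ∑ j, q j * d (ψ j) (φ j) ^ p = Tcost d p Q := by
  classical
  set e0 : QV D := EuclideanSpace.single (⟨0, hD⟩ : Fin D) (1 : ℂ) with he0
  have he0n : ‖e0‖ = 1 := by rw [he0, EuclideanSpace.norm_single]; simp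
  set q : Fin N → ℝ := fun j => if h : (j : ℕ) < Q.n then Q.q ⟨j, h⟩ else 0 with hqd
  set ψ : Fin N → QV D := fun j => if h : (j : ℕ) < Q.n then Q.ψ ⟨j, h⟩ else e0 with hψd
  set φ : Fin N → QV D := fun j => if h : (j : ℕ) < Q.n then Q.φ ⟨j, h⟩ else e0 with hφd
  have key : ∀ {M : Type} [AddCommMonoid M] (f : Fin N → M),
      (∀ j : Fin N, ¬ ((j : ℕ) < Q.n) → f j = 0) →
      ∑ j, f j = ∑ i : Fin Q.n, f (Fin.castLE hQn i) := by
    intro M _ f hf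
    have h1 : ∑ i : Fin Q.n, f (Fin.castLE hQn i) =
        ∑ j ∈ Finset.univ.map (Fin.castLEEmb hQn), f j :=
      (Finset.sum_map Finset.univ (Fin.castLEEmb hQn) f).symm
    rw [h1]
    refine (Finset.sum_subset (Finset.subset_univ _) (fun j _ hj => ?_)).symm
    refine hf j (fun h => hj ?_)
    refine Finset.mem_map.mpr ⟨⟨(j : ℕ), h⟩, Finset.mem_univ _, ?_⟩
    simp [Fin.castLEEmb]
  have hcast : ∀ i : Fin Q.n, ((Fin.castLE hQn i : Fin N) : ℕ) < Q.n := fun i => by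
    simp [Fin.coe_castLE, i.2]
  have hqc : ∀ i : Fin Q.n, q (Fin.castLE hQn i) = Q.q i := by
    intro i; rw [hqd]; simp only [dif_pos (hcast i)]; congr 1
  have hψc : ∀ i : Fin Q.n, ψ (Fin.castLE hQn i) = Q.ψ i := by
    intro i; rw [hψd]; simp only [dif_pos (hcast i)]; congr 1
  have hφc : ∀ i : Fin Q.n, φ (Fin.castLE hQn i) = Q.φ i := by
    intro i; rw [hφd]; simp only [dif_pos (hcast i)]; congr 1
  refine ⟨q, ψ, φ, ?_, ?_, ?_, ?_, ?_, ?_⟩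
  · intro j; rw [hqd]; dsimp only
    split
    · exact (Q.q_pos _).le
    · exact le_refl 0
  · intro j; rw [hψd]; dsimp only
    split
    · exact Q.ψ_unit _
    · exact he0n
  · intro j; rw [hφd]; dsimp only
    split
    · exact Q.φ_unit _
    · exact he0n
  · rw [key _ (fun j hj => by rw [hqd]; simp [dif_neg hj])]
    exact (Finset.sum_congr rfl (fun i _ => by rw [hqc, hψc])).trans Q.margL
  · rw [key _ (fun j hj => by rw [hqd]; simp [dif_neg hj])]
    exact (Finset.sum_congr rfl (fun i _ => by rw [hqc, hφc])).trans Q.margR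
  · rw [key _ (fun j hj => by rw [hqd]; simp [dif_neg hj])]
    exact Finset.sum_congr rfl (fun i _ => by rw [hqc, hψc, hφc])

lemma exists_plan {D : ℕ} {ρ σ : Matrix (Fin D) (Fin D) ℂ} (d : QV D → QV D → ℝ) (p : ℝ)
    (hρ : IsDensity ρ) (hσ : IsDensity σ) : Nonempty (TPlan D ρ σ) := by
  classical
  obtain ⟨w1, u1, hw1, hu1, hd1⟩ := exists_decomp ρ hρ
  obtain ⟨w2, u2, hw2, hu2, hd2⟩ := exists_decomp σ hσ
  have hs1 : ∑ i, w1 i = 1 := by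
    have h0 : (∑ i, (w1 i : ℂ) • qproj (u1 i)).trace = 1 := by rw [hd1]; exact hρ.2
    rw [Matrix.trace_sum] at h0
    have h2 : ∀ i, ((w1 i : ℂ) • qproj (u1 i)).trace = (w1 i : ℂ) := by
      intro i; rw [Matrix.trace_smul, trace_qproj _ (hu1 i), smul_eq_mul, mul_one]
    rw [Finset.sum_congr rfl (fun i _ => h2 i)] at h0
    exact_mod_cast h0
  have hs2 : ∑ i, w2 i = 1 := by
    have h0 : (∑ i, (w2 i : ℂ) • qproj (u2 i)).trace = 1 := by rw [hd2]; exact hσ.2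
    rw [Matrix.trace_sum] at h0
    have h2 : ∀ i, ((w2 i : ℂ) • qproj (u2 i)).trace = (w2 i : ℂ) := by
      intro i; rw [Matrix.trace_smul, trace_qproj _ (hu2 i), smul_eq_mul, mul_one]
    rw [Finset.sum_congr rfl (fun i _ => h2 i)] at h0
    exact_mod_cast h0
  set e : Fin (D * D) ≃ Fin D × Fin D := finProdFinEquiv.symm with he
  set q : Fin (D * D) → ℝ := fun m => w1 (e m).1 * w2 (e m).2 with hq
  set ψ : Fin (D * D) → QV D := fun m => u1 (e m).1 with hψ
  set φ : Fin (D * D) → QV D := fun m => u2 (e m).2 with hφ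
  have keyE : ∀ {M : Type} [AddCommMonoid M] (f : Fin D × Fin D → M),
      ∑ m : Fin (D * D), f (e m) = ∑ x : Fin D × Fin D, f x := fun f =>
    Fintype.sum_equiv e _ _ (fun m => rfl)
  have h2c : ∑ k, ((w2 k : ℝ) : ℂ) = 1 := by exact_mod_cast hs2
  have h1c : ∑ i, ((w1 i : ℝ) : ℂ) = 1 := by exact_mod_cast hs1
  have inner1 : ∀ i, ∑ k, ((w1 i * w2 k : ℝ) : ℂ) • qproj (u1 i) = (w1 i : ℂ) • qproj (u1 i) := by
    intro i
    rw [← Finset.sum_smul]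
    congr 1
    have h3 : ∑ k, ((w1 i * w2 k : ℝ) : ℂ) = (w1 i : ℂ) * ∑ k, ((w2 k : ℝ) : ℂ) := by
      rw [Finset.mul_sum]
      exact Finset.sum_congr rfl (fun k _ => by push_cast; ring)
    rw [h3, h2c, mul_one]
  have inner2 : ∀ k, ∑ i, ((w1 i * w2 k : ℝ) : ℂ) • qproj (u2 k) = (w2 k : ℂ) • qproj (u2 k) := by
    intro k
    rw [← Finset.sum_smul]
    congr 1
    have h3 : ∑ i, ((w1 i * w2 k : ℝ) : ℂ) = (∑ i, ((w1 i : ℝ) : ℂ)) * (w2 k : ℂ) := by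
      rw [Finset.sum_mul]
      exact Finset.sum_congr rfl (fun i _ => by push_cast; ring)
    rw [h3, h1c, one_mul]
  have hL : ∑ m, (q m : ℂ) • qproj (ψ m) = ρ := by
    rw [keyE (fun x => ((w1 x.1 * w2 x.2 : ℝ) : ℂ) • qproj (u1 x.1)),
      Fintype.sum_prod_type]
    exact (Finset.sum_congr rfl (fun i _ => inner1 i)).trans hd1
  have hR : ∑ m, (q m : ℂ) • qproj (φ m) = σ := by
    rw [keyE (fun x => ((w1 x.1 * w2 x.2 : ℝ) : ℂ) • qproj (u2 x.2)),
      Fintype.sum_prod_type, Finset.sum_comm]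
    exact (Finset.sum_congr rfl (fun k _ => inner2 k)).trans hd2
  obtain ⟨Q, -, -⟩ := cleanup d p q ψ φ
    (fun m => mul_nonneg (hw1 _) (hw2 _)) (fun m => hu1 _) (fun m => hu2 _) hL hR
  exact ⟨Q⟩

/-- For continuous `d`, the infimum defining `W_p^d` is attained by a transport
plan with at most `2D²` elements. -/
theorem wasserstein_infimum_attained {D : ℕ} (d : QV D → QV D → ℝ)
    (hdnn : ∀ a b : QV D, 0 ≤ d a b) (hdsymm : ∀ a b : QV D, d a b = d b a)
    (hdcont : Continuous fun x : QV D × QV D => d x.1 x.2)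
    (p : ℝ) (hp : 1 ≤ p)
    (ρ σ : Matrix (Fin D) (Fin D) ℂ) (hρ : IsDensity ρ) (hσ : IsDensity σ) :
    ∃ Q : TPlan D ρ σ, Q.n ≤ 2 * D ^ 2 ∧ (Tcost d p Q) ^ (1 / p) = Wp d p ρ σ := by
  classical
  have hD : 0 < D := by
    rcases Nat.eq_zero_or_pos D with h | h
    · exfalso
      subst h
      have h0 : ρ.trace = 0 := by simp [Matrix.trace]
      have h2 := hρ.2
      rw [h0] at h2
      exact zero_ne_one h2
    · exact h
  set N : ℕ := 2 * D ^ 2 with hN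
  set K : Set ((Fin N → ℝ) × (Fin N → QV D) × (Fin N → QV D)) :=
    {x | (∀ j, 0 ≤ x.1 j) ∧ (∀ j, ‖x.2.1 j‖ = 1) ∧ (∀ j, ‖x.2.2 j‖ = 1) ∧
      (∑ j, (x.1 j : ℂ) • qproj (x.2.1 j) = ρ) ∧
      (∑ j, (x.1 j : ℂ) • qproj (x.2.2 j) = σ)} with hK
  set F : ((Fin N → ℝ) × (Fin N → QV D) × (Fin N → QV D)) → ℝ :=
    fun x => ∑ j, x.1 j * d (x.2.1 j) (x.2.2 j) ^ p with hF
  have hFcont : Continuous F := by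
    apply continuous_finset_sum
    intro j _
    refine Continuous.mul ((continuous_apply j).comp continuous_fst) ?_
    have hd2 : Continuous fun x : ((Fin N → ℝ) × (Fin N → QV D) × (Fin N → QV D)) =>
        d (x.2.1 j) (x.2.2 j) :=
      by
        have hpair : Continuous fun x : ((Fin N → ℝ) × (Fin N → QV D) × (Fin N → QV D)) =>
            ((x.2.1 j, x.2.2 j) : QV D × QV D) :=
          ((continuous_apply j).comp (continuous_fst.comp continuous_snd)).prodMk
            ((continuous_apply j).comp (continuous_snd.comp continuous_snd))
        exact hdcont.comp hpair
    refine continuous_iff_continuousAt.mpr fun x => ?_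
    exact (Real.continuousAt_rpow_const _ p (Or.inr (by linarith))).comp hd2.continuousAt
  have hqc1 : Continuous fun x : ((Fin N → ℝ) × (Fin N → QV D) × (Fin N → QV D)) =>
      ∑ j, (x.1 j : ℂ) • qproj (x.2.1 j) := by
    apply continuous_finset_sum
    intro j _
    refine Continuous.smul (Complex.continuous_ofReal.comp
      ((continuous_apply j).comp continuous_fst)) ?_
    apply continuous_matrix
    intro i k
    have hv : Continuous fun x : ((Fin N → ℝ) × (Fin N → QV D) × (Fin N → QV D)) =>
        x.2.1 j := (continuous_apply j).comp (continuous_fst.comp continuous_snd)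
    exact ((continuous_apply i).comp ((PiLp.continuous_ofLp 2 _).comp hv)).mul (continuous_star.comp
      ((continuous_apply k).comp ((PiLp.continuous_ofLp 2 _).comp hv)))
  have hqc2 : Continuous fun x : ((Fin N → ℝ) × (Fin N → QV D) × (Fin N → QV D)) =>
      ∑ j, (x.1 j : ℂ) • qproj (x.2.2 j) := by
    apply continuous_finset_sum
    intro j _
    refine Continuous.smul (Complex.continuous_ofReal.comp
      ((continuous_apply j).comp continuous_fst)) ?_
    apply continuous_matrix
    intro i k
    have hv : Continuous fun x : ((Fin N → ℝ) × (Fin N → QV D) × (Fin N → QV D)) =>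
        x.2.2 j := (continuous_apply j).comp (continuous_snd.comp continuous_snd)
    exact ((continuous_apply i).comp ((PiLp.continuous_ofLp 2 _).comp hv)).mul (continuous_star.comp
      ((continuous_apply k).comp ((PiLp.continuous_ofLp 2 _).comp hv)))
  have hKclosed : IsClosed K := by
    rw [hK]
    simp only [Set.setOf_and]
    refine IsClosed.inter ?_ (IsClosed.inter ?_ (IsClosed.inter ?_ (IsClosed.inter ?_ ?_)))
    · have : {x : ((Fin N → ℝ) × (Fin N → QV D) × (Fin N → QV D)) | ∀ j, 0 ≤ x.1 j} =
          ⋂ j, {x | 0 ≤ x.1 j} := by ext x; simp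
      rw [this]
      exact isClosed_iInter fun j =>
        isClosed_le continuous_const ((continuous_apply j).comp continuous_fst)
    · have : {x : ((Fin N → ℝ) × (Fin N → QV D) × (Fin N → QV D)) | ∀ j, ‖x.2.1 j‖ = 1} =
          ⋂ j, {x | ‖x.2.1 j‖ = 1} := by ext x; simp
      rw [this]
      exact isClosed_iInter fun j => isClosed_eq
        (continuous_norm.comp ((continuous_apply j).comp (continuous_fst.comp continuous_snd)))
        continuous_const
    · have : {x : ((Fin N → ℝ) × (Fin N → QV D) × (Fin N → QV D)) | ∀ j, ‖x.2.2 j‖ = 1} =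
          ⋂ j, {x | ‖x.2.2 j‖ = 1} := by ext x; simp
      rw [this]
      exact isClosed_iInter fun j => isClosed_eq
        (continuous_norm.comp ((continuous_apply j).comp (continuous_snd.comp continuous_snd)))
        continuous_const
    · exact isClosed_eq hqc1 continuous_const
    · exact isClosed_eq hqc2 continuous_const
  have hKcpt : IsCompact K := by
    have hCcpt : IsCompact ((Set.univ.pi fun _ : Fin N => Set.Icc (0:ℝ) 1) ×ˢ
        ((Set.univ.pi fun _ : Fin N => Metric.sphere (0 : QV D) 1) ×ˢ
         (Set.univ.pi fun _ : Fin N => Metric.sphere (0 : QV D) 1))) :=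
      (isCompact_univ_pi fun _ => isCompact_Icc).prod
        ((isCompact_univ_pi fun _ => isCompact_sphere 0 1).prod
         (isCompact_univ_pi fun _ => isCompact_sphere 0 1))
    refine hCcpt.of_isClosed_subset hKclosed ?_
    rintro x ⟨h1, h2, h3, h4, h5⟩
    have hsumq : ∑ j, x.1 j = 1 := by
      have h0 : (∑ j, (x.1 j : ℂ) • qproj (x.2.1 j)).trace = 1 := by rw [h4]; exact hρ.2
      rw [Matrix.trace_sum] at h0
      have hh : ∀ j, ((x.1 j : ℂ) • qproj (x.2.1 j)).trace = (x.1 j : ℂ) := by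
        intro j; rw [Matrix.trace_smul, trace_qproj _ (h2 j), smul_eq_mul, mul_one]
      rw [Finset.sum_congr rfl (fun j _ => hh j)] at h0
      exact_mod_cast h0
    refine ⟨?_, ?_, ?_⟩
    · intro j _
      exact ⟨h1 j, by
        rw [← hsumq]
        exact Finset.single_le_sum (fun i _ => h1 i) (Finset.mem_univ j)⟩
    · intro j _
      exact mem_sphere_zero_iff_norm.mpr (h2 j)
    · intro j _
      exact mem_sphere_zero_iff_norm.mpr (h3 j)
  have hKne : K.Nonempty := by
    obtain ⟨Q0⟩ := exists_plan d p hρ hσ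
    obtain ⟨Q1, hQ1n, -⟩ := reduce d p Q0.n Q0 le_rfl
    obtain ⟨q, ψ, φ, h1, h2, h3, h4, h5, -⟩ := pad d p N hD Q1 hQ1n
    exact ⟨(q, ψ, φ), h1, h2, h3, h4, h5⟩
  obtain ⟨x0, hx0K, hx0min⟩ := hKcpt.exists_isMinOn hKne hFcont.continuousOn
  obtain ⟨hx1, hx2, hx3, hx4, hx5⟩ := hx0K
  obtain ⟨Qm, hQmn, hQmc⟩ := cleanup d p x0.1 x0.2.1 x0.2.2 hx1 hx2 hx3 hx4 hx5
  have hQmN : Qm.n ≤ 2 * D ^ 2 := by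
    rw [hQmn]
    calc (Finset.univ.filter (fun j => x0.1 j ≠ 0)).card ≤ (Finset.univ : Finset (Fin N)).card :=
          Finset.card_le_card (Finset.subset_univ _)
      _ = N := by rw [Finset.card_univ, Fintype.card_fin]
  have hmin : ∀ Q : TPlan D ρ σ, Tcost d p Qm ≤ Tcost d p Q := by
    intro Q
    obtain ⟨Q', hn', hc'⟩ := reduce d p Q.n Q le_rfl
    obtain ⟨q, ψ, φ, h1, h2, h3, h4, h5, h6⟩ := pad d p N hD Q' hn'
    have hxK : ((q, ψ, φ) : (Fin N → ℝ) × (Fin N → QV D) × (Fin N → QV D)) ∈ K :=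
      ⟨h1, h2, h3, h4, h5⟩
    have hle : F x0 ≤ F (q, ψ, φ) := (isMinOn_iff.mp hx0min) _ hxK
    have hFx0 : Tcost d p Qm = F x0 := hQmc
    have hFq : F (q, ψ, φ) = Tcost d p Q' := h6
    rw [hFx0]
    exact hle.trans (hFq.le.trans hc')
  refine ⟨Qm, hQmN, ?_⟩
  have hTnn : 0 ≤ Tcost d p Qm := Tcost_nonneg d hdnn p Qm
  have hpinv : 0 ≤ 1 / p := by positivity
  apply le_antisymm
  · refine le_csInf ⟨_, Qm, rfl⟩ ?_
    rintro b ⟨Q, rfl⟩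
    exact Real.rpow_le_rpow hTnn (hmin Q) hpinv
  · refine csInf_le ⟨0, ?_⟩ ⟨Qm, rfl⟩
    rintro b ⟨Q, rfl⟩
    exact Real.rpow_nonneg (Tcost_nonneg d hdnn p Q) _
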